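/- If a finite multigraph G is a second-player win in Strings and Coins, then the graph G' obtained from G by attaching a single loop to an existing vertex of G is a first-player win. -/

import Mathlib

/-- A position in Strings and Coins: a finite multigraph, with vertex set `verts`
and a multiset of (possibly loop) edges, each given as an ordered pair. -/
structure SCPos (V : Type) where
  verts : Finset V
  edges : Multiset (V × V)

variable {V : Type} [DecidableEq V]

/-- Number of edges incident to `v` (each edge, including a loop, counted once);
only being zero or nonzero matters for captures. -/
def SCPos.deg (p : SCPos V) (v : V) : ℕ :=
  (p.edges.filter (fun f => f.1 = v ∨ f.2 = v)).card

/-- Degree of `v`, where a loop at `v` contributes 2. -/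
def SCPos.degree (p : SCPos V) (v : V) : ℕ :=
  (p.edges.map (fun e => (if e.1 = v then 1 else 0) + (if e.2 = v then 1 else 0))).sum

/-- The position obtained by removing one copy of edge `e`. -/
def SCPos.remove (p : SCPos V) (e : V × V) : SCPos V :=
  ⟨p.verts, p.edges.erase e⟩

/-- The number of vertices captured by removing edge `e` from `p`:
endpoints of `e` whose degree drops to zero. -/
def SCPos.caps (p : SCPos V) (e : V × V) : ℕ :=
  (p.verts.filter (fun v => (v = e.1 ∨ v = e.2) ∧ (p.remove e).deg v = 0)).card

/-- Optimal score `(mover's points, opponent's points)` of Strings and Coins,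
under play where each player maximizes their own number of captured vertices.
A player who captures at least one vertex moves again. -/
noncomputable def SCPos.score (p : SCPos V) : ℕ × ℕ :=
  if h : p.edges = 0 then (0, 0)
  else
    (p.edges.toList.attach.map (fun ⟨e, he⟩ =>
      let s := (p.remove e).score
      let c := p.caps e
      if c = 0 then (s.2, s.1) else (s.1 + c, s.2))).foldl
      (fun best o => if best.1 ≤ o.1 then o else best) (0, 0)
termination_by p.edges.card
decreasing_by
  exact Multiset.card_erase_lt_of_mem (Multiset.mem_toList.mp he)

/-- The cycle graph `C_n` as a Strings and Coins position. -/
def cyclePos (n : ℕ) : SCPos ℕ :=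
  ⟨Finset.range n, ((List.range n).map (fun i => (i, (i + 1) % n)) : List (ℕ × ℕ))⟩

/-- The friendship graph `F_n`: `n` triangles sharing the common vertex `0`. -/
def friendshipPos (n : ℕ) : SCPos ℕ :=
  ⟨Finset.range (2 * n + 1),
   (((List.range n).flatMap fun i =>
      [(0, 2 * i + 1), (0, 2 * i + 2), (2 * i + 1, 2 * i + 2)]) : List (ℕ × ℕ))⟩

/-- The pinwheel graph `PW_n`: `n` copies of `C_4` sharing the common vertex `0`. -/
def pinwheelPos (n : ℕ) : SCPos ℕ :=
  ⟨Finset.range (3 * n + 1),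
   (((List.range n).flatMap fun i =>
      [(0, 3 * i + 1), (3 * i + 1, 3 * i + 2), (3 * i + 2, 3 * i + 3), (3 * i + 3, 0)]) :
     List (ℕ × ℕ))⟩

/-- The loopy star `L_n`: center `0`, outer vertices `1, …, n`, each joined to the
center by an edge and carrying one loop. -/
def loopyStarPos (n : ℕ) : SCPos ℕ :=
  ⟨Finset.range (n + 1),
   (((List.range n).flatMap fun i => [(0, i + 1), (i + 1, i + 1)]) : List (ℕ × ℕ))⟩

/-- The double loopy star `L(n,2)`: center `0`, outer vertices `1, …, n`, each joined
to the center by an edge and carrying two loops. -/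
def doubleLoopyStarPos (n : ℕ) : SCPos ℕ :=
  ⟨Finset.range (n + 1),
   (((List.range n).flatMap fun i => [(0, i + 1), (i + 1, i + 1), (i + 1, i + 1)]) :
     List (ℕ × ℕ))⟩

/-- The complete bipartite graph `K(1, b)` (a star with `b` leaves). -/
def starPos (b : ℕ) : SCPos ℕ :=
  ⟨Finset.range (b + 1), (((List.range b).map fun i => (0, i + 1)) : List (ℕ × ℕ))⟩

/-- The complete bipartite graph `K(2, b)`: part `{0, 1}` and part `{2, …, b+1}`. -/
def k2bPos (b : ℕ) : SCPos ℕ :=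
  ⟨Finset.range (b + 2),
   (((List.range b).flatMap fun j => [(0, j + 2), (1, j + 2)]) : List (ℕ × ℕ))⟩

/-- The balloon path `BP_n`: a path on vertices `0, …, n-1` with one loop at each vertex. -/
def balloonPathPos (n : ℕ) : SCPos ℕ :=
  ⟨Finset.range n,
   ((((List.range (n - 1)).map fun i => (i, i + 1)) ++
     ((List.range n).map fun i => (i, i))) : List (ℕ × ℕ))⟩

/-- The loopy cycle `C_(n,1)`: the cycle `C_n` with one extra loop at vertex `0`. -/
def loopyCyclePos (n : ℕ) : SCPos ℕ :=
  ⟨Finset.range n, (0, 0) ::ₘ (cyclePos n).edges⟩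

/-- The Strings and Coins position of a finite simple graph: all vertices,
and one (arbitrarily oriented) edge for each edge of the graph. -/
noncomputable def posOfGraph {W : Type} [Fintype W] [DecidableEq W]
    (G : SimpleGraph W) [DecidableRel G.Adj] : SCPos W :=
  ⟨Finset.univ, G.edgeFinset.val.map Quot.out⟩

-- aux
def SCPos.N (p : SCPos V) : ℕ := (p.verts.filter (fun v => p.deg v ≠ 0)).card

lemma foldlMem (b : ℕ × ℕ) (l : List (ℕ × ℕ)) :
    l.foldl (fun best o => if best.1 ≤ o.1 then o else best) b ∈ b :: l := by
  induction l generalizing b with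
  | nil => simp
  | cons o t ih =>
    simp only [List.foldl_cons]
    rcases List.mem_cons.mp (ih (if b.1 ≤ o.1 then o else b)) with h | h
    · rw [h]; split <;> simp
    · simp [h]

lemma foldlSelfLe (t : List (ℕ × ℕ)) : ∀ (c : ℕ × ℕ),
    c.1 ≤ (t.foldl (fun best o => if best.1 ≤ o.1 then o else best) c).1 := by
  induction t with
  | nil => simp
  | cons x s ih2 =>
    intro c
    simp only [List.foldl_cons]
    refine le_trans ?_ (ih2 _)
    split <;> omega

lemma foldlGe (b : ℕ × ℕ) (l : List (ℕ × ℕ)) (o : ℕ × ℕ) (ho : o ∈ l) :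
    o.1 ≤ (l.foldl (fun best o => if best.1 ≤ o.1 then o else best) b).1 := by
  induction l generalizing b with
  | nil => simp at ho
  | cons a t ih =>
    rcases List.mem_cons.mp ho with rfl | h
    · simp only [List.foldl_cons]
      refine le_trans ?_ (foldlSelfLe t _)
      split <;> omega
    · exact ih _ h

lemma deg_remove_le (p : SCPos V) (e : V × V) (w : V) :
    (p.remove e).deg w ≤ p.deg w :=
  Multiset.card_le_card (Multiset.filter_le_filter _ (p.edges.erase_le e))

lemma deg_remove_not_incident (p : SCPos V) (e : V × V) (w : V)
    (hw : ¬ (e.1 = w ∨ e.2 = w)) : (p.remove e).deg w = p.deg w := by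
  by_cases he : e ∈ p.edges
  · unfold SCPos.remove SCPos.deg
    conv_rhs => rw [← Multiset.cons_erase he]
    simp [Multiset.filter_cons, hw]
  · unfold SCPos.remove SCPos.deg
    rw [Multiset.erase_of_notMem he]

lemma deg_remove_incident (p : SCPos V) (e : V × V) (he : e ∈ p.edges) (w : V)
    (hw : e.1 = w ∨ e.2 = w) : p.deg w = (p.remove e).deg w + 1 := by
  unfold SCPos.remove SCPos.deg
  conv_lhs => rw [← Multiset.cons_erase he]
  simp [Multiset.filter_cons, hw]

lemma N_remove (p : SCPos V) (e : V × V) (he : e ∈ p.edges) :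
    p.N = (p.remove e).N + p.caps e := by
  classical
  have hverts : (p.remove e).verts = p.verts := rfl
  unfold SCPos.N SCPos.caps
  rw [hverts, ← Finset.card_union_of_disjoint]
  · congr 1
    ext w
    simp only [Finset.mem_union, Finset.mem_filter]
    constructor
    · rintro ⟨hwv, hdeg⟩
      by_cases h0 : (p.remove e).deg w = 0
      · refine Or.inr ⟨hwv, ?_, h0⟩
        by_contra hni
        rw [deg_remove_not_incident p e w (by tauto)] at h0
        exact hdeg h0
      · exact Or.inl ⟨hwv, h0⟩
    · rintro (⟨hwv, hdeg⟩ | ⟨hwv, hinc, _⟩)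
      · exact ⟨hwv, fun h => hdeg (Nat.eq_zero_of_le_zero (h ▸ deg_remove_le p e w))⟩
      · refine ⟨hwv, ?_⟩
        rw [deg_remove_incident p e he w (by tauto)]
        omega
  · rw [Finset.disjoint_left]
    intro w hw1 hw2
    simp only [Finset.mem_filter] at hw1 hw2
    exact hw1.2 hw2.2.2

lemma foldlMemNe (l : List (ℕ × ℕ)) (hl : l ≠ []) :
    l.foldl (fun best o => if best.1 ≤ o.1 then o else best) (0, 0) ∈ l := by
  cases l with
  | nil => exact absurd rfl hl
  | cons o t =>
    simp only [List.foldl_cons, Nat.zero_le, if_true]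
    exact foldlMem o t

lemma score_sum (p : SCPos V) : p.score.1 + p.score.2 = p.N := by
  generalize hn : p.edges.card = n
  induction n using Nat.strong_induction_on generalizing p with
  | _ n ih =>
  rw [SCPos.score]
  split
  case isTrue h =>
    have : ∀ v, p.deg v = 0 := by
      intro v; unfold SCPos.deg; rw [h]; simp
    unfold SCPos.N
    simp [this]
  case isFalse h =>
    set l := (p.edges.toList.attach.map (fun (x : {e // e ∈ p.edges.toList}) =>
      let s := (p.remove x.1).score
      let c := p.caps x.1
      if c = 0 then (s.2, s.1) else (s.1 + c, s.2))) with hl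
    have hne : l ≠ [] := by
      simp only [hl, ne_eq, List.map_eq_nil_iff, List.attach_eq_nil_iff]
      intro hc
      exact h (Multiset.toList_eq_nil.mp hc)
    have hmem := foldlMemNe l hne
    obtain ⟨⟨e, he⟩, -, heq⟩ := List.mem_map.mp hmem
    have heM : e ∈ p.edges := Multiset.mem_toList.mp he
    have hcard : (p.remove e).edges.card < n := by
      rw [← hn]; exact Multiset.card_erase_lt_of_mem heM
    have hsum : (p.remove e).score.1 + (p.remove e).score.2 = (p.remove e).N :=
      ih _ hcard _ rfl
    rw [← heq]
    have hN := N_remove p e heM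
    by_cases hc : p.caps e = 0 <;> simp only [hc, if_true, if_false, reduceIte] <;> omega

lemma score_ge (p : SCPos V) (e : V × V) (he : e ∈ p.edges) (hc : p.caps e = 0) :
    (p.remove e).score.2 ≤ p.score.1 := by
  have h : p.edges ≠ 0 := by
    intro h0; rw [h0] at he; simp at he
  conv_rhs => rw [SCPos.score]
  rw [dif_neg h]
  have heL : e ∈ p.edges.toList := Multiset.mem_toList.mpr he
  have hmem : ((p.remove e).score.2, (p.remove e).score.1) ∈
      (p.edges.toList.attach.map (fun (x : {e // e ∈ p.edges.toList}) =>
        let s := (p.remove x.1).score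
        let c := p.caps x.1
        if c = 0 then (s.2, s.1) else (s.1 + c, s.2))) := by
    refine List.mem_map.mpr ⟨⟨e, heL⟩, List.mem_attach _ _, ?_⟩
    simp [hc]
  exact foldlGe _ _ _ hmem
lemma deg_ne_zero_of_degree_pos (p : SCPos V) (v : V) (h : 0 < p.degree v) :
    p.deg v ≠ 0 := by
  intro h0
  unfold SCPos.deg at h0
  rw [Multiset.card_eq_zero, Multiset.filter_eq_nil] at h0
  unfold SCPos.degree at h
  have hz : (p.edges.map (fun e => (if e.1 = v then 1 else 0) + (if e.2 = v then 1 else 0))).sum = 0 := by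
    apply Multiset.sum_eq_zero
    intro x hx
    obtain ⟨e, he, rfl⟩ := Multiset.mem_map.mp hx
    have := h0 e he
    push_neg at this
    simp [this.1, this.2]
  omega


/-- If a finite multigraph `G` (every vertex of nonzero degree, as in a valid
starting position) is a second-player win, then attaching a single loop to an
existing vertex yields a first-player win. -/
theorem stmt3 {V : Type} [DecidableEq V] (G : SCPos V)
    (hpos : ∀ v ∈ G.verts, 0 < G.degree v)
    (hG : (G.score).1 < (G.score).2) (v : V) (hv : v ∈ G.verts) :
    ((SCPos.mk G.verts ((v, v) ::ₘ G.edges)).score).2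
      < ((SCPos.mk G.verts ((v, v) ::ₘ G.edges)).score).1 := by
  obtain ⟨verts, edges⟩ := G
  set G : SCPos V := ⟨verts, edges⟩ with hGdef
  set G' : SCPos V := ⟨verts, (v, v) ::ₘ edges⟩ with hG'def
  have hdegv : G.deg v ≠ 0 := deg_ne_zero_of_degree_pos G v (hpos v hv)
  have hrem : G'.remove (v, v) = G := by
    unfold SCPos.remove
    rw [hG'def]
    simp [Multiset.erase_cons_head]
    rfl
  have hcaps : G'.caps (v, v) = 0 := by
    unfold SCPos.caps
    rw [Finset.card_eq_zero, Finset.filter_eq_empty_iff]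
    rintro w hw ⟨hvw, h0⟩
    rcases hvw with rfl | rfl <;>
    · rw [hrem] at h0; exact hdegv h0
  have h1 : G.score.2 ≤ G'.score.1 := by
    have := score_ge G' (v, v) (Multiset.mem_cons_self _ _) hcaps
    rwa [hrem] at this
  have hN : G'.N = G.N := by
    unfold SCPos.N
    congr 1
    apply Finset.filter_congr
    intro w hw
    simp only [ne_eq]
    have hGdeg : G'.deg w = (if (v = w ∨ v = w) then 1 else 0) + G.deg w := by
      unfold SCPos.deg
      rw [hG'def]
      simp only [Multiset.filter_cons]
      split <;> simp_all <;> omega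
    by_cases hwv : w = v
    · subst hwv
      have := deg_ne_zero_of_degree_pos G w (hpos w hw)
      simp [hGdeg, this]
    · have : ¬ (v = w ∨ v = w) := by
        intro hc; exact hwv (by tauto)
      rw [hGdeg, if_neg this]
      simp
  have hs1 := score_sum G
  have hs2 := score_sum G'
  omega
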